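/- arXiv:0806.1390 — 4 statements merged into one kernel-verified Lean document; each statement's English description precedes it below -/
import Mathlib

section
/- In every Steiner t-(v, t+1) trade T = {T_1, T_2} of volume s, every element x of found(T) satisfies 2·r_x ≤ s. -/
/-- `T1, T2` form a `t`-`(v,k)` trade on the ground type `α` (the `v`-set):
two multisets of `k`-element blocks with no block in common, of positive
volume, such that every `t`-subset is contained in the same number of blocks
of `T1` as of `T2`. -/
def IsTrade {α : Type} [DecidableEq α] (t k : ℕ) (T1 T2 : Multiset (Finset α)) : Prop :=
  (∀ B ∈ T1, B.card = k) ∧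
  (∀ B ∈ T2, B.card = k) ∧
  (∀ B ∈ T1, B ∉ T2) ∧
  T1 ≠ 0 ∧
  ∀ A : Finset α, A.card = t →
    Multiset.countP (fun B => A ⊆ B) T1 = Multiset.countP (fun B => A ⊆ B) T2

/-- A Steiner trade: every `t`-subset appears in at most one block of each side. -/
def IsSteinerTrade {α : Type} [DecidableEq α] (t k : ℕ) (T1 T2 : Multiset (Finset α)) : Prop :=
  IsTrade t k T1 T2 ∧
  ∀ A : Finset α, A.card = t →
    Multiset.countP (fun B => A ⊆ B) T1 ≤ 1 ∧ Multiset.countP (fun B => A ⊆ B) T2 ≤ 1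

/-- The foundation of a trade: all points covered by some block. -/
def foundation {α : Type} [DecidableEq α] (T1 T2 : Multiset (Finset α)) : Finset α :=
  (T1 + T2).toFinset.biUnion id

/-- `rx T1 x`: the number of blocks of `T1` containing `x`. -/
def rx {α : Type} [DecidableEq α] (T1 : Multiset (Finset α)) (x : α) : ℕ :=
  Multiset.countP (fun B => x ∈ B) T1

/-- `lamxy T1 x y`: the number of blocks of `T1` containing both `x` and `y`. -/
def lamxy {α : Type} [DecidableEq α] (T1 : Multiset (Finset α)) (x y : α) : ℕ :=
  Multiset.countP (fun B => x ∈ B ∧ y ∈ B) T1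

lemma my_sum_countP {α : Type} [DecidableEq α] [Fintype α] (k t : ℕ)
    (T : Multiset (Finset α)) (hk : ∀ B ∈ T, B.card = k) :
    ∑ A ∈ Finset.univ.powersetCard t, Multiset.countP (fun B => A ⊆ B) T
      = k.choose t * Multiset.card T := by
  induction T using Multiset.induction with
  | empty => simp
  | cons a s ih =>
    have ha : a.card = k := hk a (Multiset.mem_cons_self a s)
    have ihs := ih (fun B hB => hk B (Multiset.mem_cons_of_mem hB))
    have hstep : ∀ A : Finset α, Multiset.countP (fun B => A ⊆ B) (a ::ₘ s)
        = Multiset.countP (fun B => A ⊆ B) s + if A ⊆ a then 1 else 0 :=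
      fun A => Multiset.countP_cons _ a s
    rw [Finset.sum_congr rfl (fun A _ => hstep A), Finset.sum_add_distrib, ihs]
    have h2 : ∑ A ∈ Finset.univ.powersetCard t, (if A ⊆ a then 1 else 0)
        = ((Finset.univ.powersetCard t).filter (fun A => A ⊆ a)).card :=
      (Finset.card_filter _ _).symm
    have hfe : ((Finset.univ.powersetCard t).filter (fun A => A ⊆ a)) = a.powersetCard t := by
      ext A
      simp [Finset.mem_powersetCard, Finset.mem_filter, Finset.subset_univ]
      tauto
    rw [h2, hfe, Finset.card_powersetCard, ha, Multiset.card_cons]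
    ring

lemma my_sum_countP_mem {α : Type} [DecidableEq α] [Fintype α] (t : ℕ) (x : α)
    (T : Multiset (Finset α)) (hk : ∀ B ∈ T, B.card = t + 1) :
    ∑ A ∈ (Finset.univ.powersetCard t).filter (fun A => x ∈ A),
        Multiset.countP (fun B => A ⊆ B) T
      = t * Multiset.countP (fun B => x ∈ B) T := by
  induction T using Multiset.induction with
  | empty => simp
  | cons a s ih =>
    have ha : a.card = t + 1 := hk a (Multiset.mem_cons_self a s)
    have ihs := ih (fun B hB => hk B (Multiset.mem_cons_of_mem hB))
    have hstep : ∀ A : Finset α, Multiset.countP (fun B => A ⊆ B) (a ::ₘ s)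
        = Multiset.countP (fun B => A ⊆ B) s + if A ⊆ a then 1 else 0 :=
      fun A => Multiset.countP_cons _ a s
    rw [Finset.sum_congr rfl (fun A _ => hstep A), Finset.sum_add_distrib, ihs,
      Multiset.countP_cons]
    have key : ∑ A ∈ (Finset.univ.powersetCard t).filter (fun A => x ∈ A),
        (if A ⊆ a then 1 else 0) = t * (if x ∈ a then 1 else 0) := by
      rw [← Finset.card_filter]
      by_cases hxa : x ∈ a
      · have hset : ((Finset.univ.powersetCard t).filter (fun A => x ∈ A)).filter
            (fun A => A ⊆ a) = (a.powersetCard t).filter (fun A => x ∈ A) := by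
          ext A
          simp only [Finset.mem_filter, Finset.mem_powersetCard, Finset.subset_univ,
            true_and]
          tauto
        rw [hset]
        have hcompl := Finset.card_filter_add_card_filter_not
          (s := a.powersetCard t) (p := fun A => x ∈ A)
        have hneg : (a.powersetCard t).filter (fun A => ¬ x ∈ A)
            = (a.erase x).powersetCard t := by
          ext A
          simp only [Finset.mem_filter, Finset.mem_powersetCard, Finset.subset_erase]
          tauto
        have h1 : ((a.erase x).powersetCard t).card = 1 := by
          rw [Finset.card_powersetCard, Finset.card_erase_of_mem hxa, ha]
          simp
        have h2 : (a.powersetCard t).card = t + 1 := by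
          rw [Finset.card_powersetCard, ha, Nat.choose_succ_self_right]
        rw [hneg, h1] at hcompl
        simp only [hxa, if_true, mul_one]
        omega
      · have hset : ((Finset.univ.powersetCard t).filter (fun A => x ∈ A)).filter
            (fun A => A ⊆ a) = ∅ := by
          ext A
          simp only [Finset.mem_filter, Finset.notMem_empty, iff_false, not_and]
          intro h hsub
          exact hxa (hsub h.2)
        rw [hset]
        simp [hxa]
    rw [key]
    ring

lemma my_count_le_countP {α : Type} [DecidableEq α] (s : Multiset α) (p : α → Prop)
    [DecidablePred p] (a : α) (hpa : p a) : Multiset.count a s ≤ Multiset.countP p s := by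
  rw [Multiset.count, Multiset.countP_eq_card_filter, Multiset.countP_eq_card_filter]
  exact Multiset.card_le_card (Multiset.monotone_filter_right s (fun b hb => hb ▸ hpa))

lemma my_two_le_card {α : Type} [DecidableEq α] {s : Multiset α} {a b : α}
    (ha : a ∈ s) (hb : b ∈ s) (hne : a ≠ b) : 2 ≤ Multiset.card s := by
  have hb' : b ∈ s.erase a := (Multiset.mem_erase_of_ne (Ne.symm hne)).mpr hb
  have h1 : 0 < Multiset.card (s.erase a) := Multiset.card_pos_iff_exists_mem.mpr ⟨b, hb'⟩
  have h2 : a ::ₘ s.erase a = s := Multiset.cons_erase ha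
  have h3 : Multiset.card s = Multiset.card (s.erase a) + 1 := by
    conv_lhs => rw [← h2]
    rw [Multiset.card_cons]
  omega

/-- In every Steiner `t`-`(v, t+1)` trade of volume `s`, every element `x` of the
foundation satisfies `2 * r_x ≤ s`. -/
theorem steiner_rx_le_half_vol (v t s : ℕ) (ht : 0 < t) (hv : t + 1 < v)
    (T1 T2 : Multiset (Finset (Fin v))) (hT : IsSteinerTrade t (t + 1) T1 T2)
    (hs : Multiset.card T1 = s)
    (x : Fin v) (hx : x ∈ foundation T1 T2) :
    2 * rx T1 x ≤ s := by
  obtain ⟨⟨h1k, h2k, hdisj, hne, htrade⟩, hsteiner⟩ := hT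
  show 2 * Multiset.countP (fun B => x ∈ B) T1 ≤ s
  subst hs
  -- erase cards
  have herase1 : ∀ B ∈ T1, x ∈ B → (B.erase x).card = t := by
    intro B hB hxB
    rw [Finset.card_erase_of_mem hxB, h1k B hB]
    simp
  -- card T2 = card T1
  have hA1 := my_sum_countP (t + 1) t T1 h1k
  have hA2 := my_sum_countP (t + 1) t T2 h2k
  have hsumeq : ∑ A ∈ Finset.univ.powersetCard t, Multiset.countP (fun B => A ⊆ B) T1
      = ∑ A ∈ Finset.univ.powersetCard t, Multiset.countP (fun B => A ⊆ B) T2 :=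
    Finset.sum_congr rfl fun A hA => htrade A (Finset.mem_powersetCard.mp hA).2
  have hchoose : (t + 1).choose t = t + 1 := Nat.choose_succ_self_right t
  have hcard2 : Multiset.card T2 = Multiset.card T1 := by
    rw [hA1, hA2, hchoose] at hsumeq
    exact (Nat.eq_of_mul_eq_mul_left (by omega) hsumeq).symm
  -- rx equal on both sides
  have hB1 := my_sum_countP_mem t x T1 h1k
  have hB2 := my_sum_countP_mem t x T2 h2k
  have hsumeq2 : ∑ A ∈ (Finset.univ.powersetCard t).filter (fun A => x ∈ A),
        Multiset.countP (fun B => A ⊆ B) T1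
      = ∑ A ∈ (Finset.univ.powersetCard t).filter (fun A => x ∈ A),
        Multiset.countP (fun B => A ⊆ B) T2 :=
    Finset.sum_congr rfl fun A hA =>
      htrade A (Finset.mem_powersetCard.mp (Finset.mem_filter.mp hA).1).2
  have hrxeq : Multiset.countP (fun B => x ∈ B) T1 = Multiset.countP (fun B => x ∈ B) T2 := by
    rw [hB1, hB2] at hsumeq2
    exact Nat.eq_of_mul_eq_mul_left ht hsumeq2
  set S1 := T1.toFinset.filter (fun B => x ∈ B) with hS1def
  set S2 := T2.toFinset.filter (fun B => x ∉ B) with hS2def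
  -- blocks containing x have multiplicity 1 in T1
  have hcount1 : ∀ B ∈ T1, x ∈ B → Multiset.count B T1 = 1 := by
    intro B hB hxB
    have hle := (hsteiner (B.erase x) (herase1 B hB hxB)).1
    have hle2 : Multiset.count B T1 ≤ Multiset.countP (fun C => B.erase x ⊆ C) T1 :=
      my_count_le_countP T1 _ B (Finset.erase_subset x B)
    have hge : 1 ≤ Multiset.count B T1 := Multiset.one_le_count_iff_mem.mpr hB
    omega
  have hnodup : (T1.filter (fun B => x ∈ B)).Nodup := by
    rw [Multiset.nodup_iff_count_le_one]
    intro B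
    rw [Multiset.count_filter]
    split
    · by_cases hB : B ∈ T1
      · rw [hcount1 B hB ‹x ∈ B›]
      · rw [Multiset.count_eq_zero_of_notMem hB]
        omega
    · omega
  have hrx1 : Multiset.countP (fun B => x ∈ B) T1 = S1.card := by
    rw [Multiset.countP_eq_card_filter, hS1def, ← Multiset.toFinset_filter]
    exact (Multiset.toFinset_card_of_nodup hnodup).symm
  have hS2le : S2.card ≤ Multiset.countP (fun B => x ∉ B) T2 := by
    rw [Multiset.countP_eq_card_filter, hS2def, ← Multiset.toFinset_filter]
    exact Multiset.toFinset_card_le _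
  -- the injection
  have hex : ∀ B : Finset (Fin v), ∃ B', B ∈ S1 → B' ∈ T2 ∧ B.erase x ⊆ B' := by
    intro B
    by_cases hB : B ∈ S1
    · have hBT1 : B ∈ T1 := Multiset.mem_toFinset.mp (Finset.mem_filter.mp hB).1
      have hxB : x ∈ B := (Finset.mem_filter.mp hB).2
      have hpos : 0 < Multiset.countP (fun C => B.erase x ⊆ C) T2 := by
        rw [← htrade _ (herase1 B hBT1 hxB)]
        exact Multiset.countP_pos.mpr ⟨B, hBT1, Finset.erase_subset x B⟩
      obtain ⟨B', hB', hsub⟩ := Multiset.countP_pos.mp hpos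
      exact ⟨B', fun _ => ⟨hB', hsub⟩⟩
    · exact ⟨∅, fun h => absurd h hB⟩
  choose f hf using hex
  have hS1mem : ∀ B ∈ S1, B ∈ T1 ∧ x ∈ B := by
    intro B hB
    exact ⟨Multiset.mem_toFinset.mp (Finset.mem_filter.mp hB).1, (Finset.mem_filter.mp hB).2⟩
  have hmaps : ∀ B ∈ S1, f B ∈ S2 := by
    intro B hB
    obtain ⟨hBT1, hxB⟩ := hS1mem B hB
    obtain ⟨hfT2, hfsub⟩ := hf B hB
    have hxf : x ∉ f B := by
      intro hxf
      have hBsub : B ⊆ f B := by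
        intro y hy
        by_cases hyx : y = x
        · exact hyx ▸ hxf
        · exact hfsub (Finset.mem_erase.mpr ⟨hyx, hy⟩)
      have : B = f B := Finset.eq_of_subset_of_card_le hBsub
        (by rw [h2k _ hfT2, h1k _ hBT1])
      exact hdisj B hBT1 (this ▸ hfT2)
    exact Finset.mem_filter.mpr ⟨Multiset.mem_toFinset.mpr hfT2, hxf⟩
  have hinj : Set.InjOn f S1 := by
    intro B1 hB1 B2 hB2 hfe
    by_contra hne12
    have hB1' : B1 ∈ S1 := hB1
    have hB2' : B2 ∈ S1 := hB2
    obtain ⟨hB1T1, hx1⟩ := hS1mem B1 hB1'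
    obtain ⟨hB2T1, hx2⟩ := hS1mem B2 hB2'
    obtain ⟨hf1T2, hsub1⟩ := hf B1 hB1'
    obtain ⟨hf2T2, hsub2⟩ := hf B2 hB2'
    set A1 := B1.erase x with hA1def
    set A2 := B2.erase x with hA2def
    have hA1c : A1.card = t := herase1 B1 hB1T1 hx1
    have hA2c : A2.card = t := herase1 B2 hB2T1 hx2
    have hAne : A1 ≠ A2 := by
      intro h
      apply hne12
      have := congrArg (insert x) h
      rwa [hA1def, hA2def, Finset.insert_erase hx1, Finset.insert_erase hx2] at this
    have hsub2' : A2 ⊆ f B1 := hfe ▸ hsub2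
    have hunion : (A1 ∪ A2).card ≤ t + 1 := by
      rw [← h2k _ hf1T2]
      exact Finset.card_le_card (Finset.union_subset hsub1 hsub2')
    have hiu : (A1 ∩ A2).card + (A1 ∪ A2).card = t + t := by
      rw [Finset.card_inter_add_card_union, hA1c, hA2c]
    have hilt : (A1 ∩ A2).card < t := by
      have hne' : A1 ∩ A2 ≠ A1 := by
        intro h
        have hA12 : A1 ⊆ A2 := by
          rw [← h]
          exact Finset.inter_subset_right
        exact hAne (Finset.eq_of_subset_of_card_le hA12 (le_of_eq (hA2c.trans hA1c.symm)))
      have hss : A1 ∩ A2 ⊂ A1 :=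
        Finset.ssubset_iff_subset_ne.mpr ⟨Finset.inter_subset_left, hne'⟩
      have := Finset.card_lt_card hss
      omega
    have hieq : (A1 ∩ A2).card = t - 1 := by omega
    have hxnot : x ∉ A1 ∩ A2 := fun h =>
      Finset.notMem_erase x B1 (Finset.mem_inter.mp h).1
    set D := insert x (A1 ∩ A2) with hDdef
    have hDcard : D.card = t := by
      rw [hDdef, Finset.card_insert_of_notMem hxnot, hieq]
      omega
    have hD1 : D ⊆ B1 :=
      Finset.insert_subset hx1 (Finset.inter_subset_left.trans (Finset.erase_subset x B1))
    have hD2 : D ⊆ B2 :=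
      Finset.insert_subset hx2 (Finset.inter_subset_right.trans (Finset.erase_subset x B2))
    have hB1f : B1 ∈ T1.filter (fun C => D ⊆ C) := Multiset.mem_filter.mpr ⟨hB1T1, hD1⟩
    have hB2f : B2 ∈ T1.filter (fun C => D ⊆ C) := Multiset.mem_filter.mpr ⟨hB2T1, hD2⟩
    have h2le : 2 ≤ Multiset.card (T1.filter (fun C => D ⊆ C)) :=
      my_two_le_card hB1f hB2f hne12
    have hle1 := (hsteiner D hDcard).1
    rw [Multiset.countP_eq_card_filter] at hle1
    omega
  have hcardle : S1.card ≤ S2.card := Finset.card_le_card_of_injOn f hmaps hinj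
  have hsplit : Multiset.countP (fun B => x ∈ B) T2
      + Multiset.countP (fun B => x ∉ B) T2 = Multiset.card T2 := by
    rw [Multiset.countP_eq_card_filter, Multiset.countP_eq_card_filter,
      ← Multiset.card_add, Multiset.filter_add_not]
  omega
end

section
/- Let T = {T_1, T_2} be a t-(v,k) trade with t ≥ 2 and let x, y ∈ found(T). Then every (t-1)-subset of X is contained in the same number of blocks of the multiset T_1 + T_{2x} + T_{2y} as of the multiset T_2 + T_{1x} + T_{1y} (multiset sums, counting multiplicities). -/
lemma sum_insert_countP {v k m : ℕ} (A : Finset (Fin v)) (hA : A.card = m)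
    (s : Multiset (Finset (Fin v))) (hs : ∀ B ∈ s, B.card = k) :
    ∑ z ∈ Aᶜ, Multiset.countP (fun B => insert z A ⊆ B) s
      = (k - m) * Multiset.countP (fun B => A ⊆ B) s := by
  induction s using Multiset.induction_on with
  | empty => simp
  | cons B s ih =>
    have hB : B.card = k := hs B (Multiset.mem_cons_self B s)
    have hss : ∀ C ∈ s, C.card = k := fun C hC => hs C (Multiset.mem_cons_of_mem hC)
    simp only [Multiset.countP_cons, Finset.sum_add_distrib, ih hss, Nat.mul_add]
    congr 1
    by_cases hAB : A ⊆ B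
    · have : ∀ z ∈ Aᶜ, (if insert z A ⊆ B then 1 else 0) = (if z ∈ B \ A then 1 else 0) := by
        intro z hz
        simp only [Finset.insert_subset_iff, hAB, and_true, Finset.mem_sdiff,
          Finset.mem_compl.mp hz, not_false_iff, and_true]
      rw [Finset.sum_congr rfl this, Finset.sum_ite_mem, Finset.sum_const]
      have hsub : B \ A ⊆ Aᶜ := by
        intro z hz
        simp only [Finset.mem_sdiff] at hz
        exact Finset.mem_compl.mpr hz.2
      rw [Finset.inter_eq_right.mpr hsub, Finset.card_sdiff_of_subset hAB, hA, hB]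
      simp [hAB]
    · have : ∀ z ∈ Aᶜ, (if insert z A ⊆ B then 1 else 0) = 0 := by
        intro z _
        have : ¬ insert z A ⊆ B := fun h => hAB (Finset.Subset.trans (Finset.subset_insert z A) h)
        simp [this]
      rw [Finset.sum_congr rfl this]
      simp [hAB]

lemma trade_count_sub1 {v t k : ℕ} (ht : 1 ≤ t) (htk : t ≤ k)
    {T1 T2 : Multiset (Finset (Fin v))} (hT : IsTrade t k T1 T2)
    (A : Finset (Fin v)) (hA : A.card = t - 1) :
    Multiset.countP (fun B => A ⊆ B) T1 = Multiset.countP (fun B => A ⊆ B) T2 := by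
  obtain ⟨h1, h2, -, -, h5⟩ := hT
  have key : ∑ z ∈ Aᶜ, Multiset.countP (fun B => insert z A ⊆ B) T1
      = ∑ z ∈ Aᶜ, Multiset.countP (fun B => insert z A ⊆ B) T2 := by
    refine Finset.sum_congr rfl fun z hz => h5 _ ?_
    rw [Finset.card_insert_of_notMem (Finset.mem_compl.mp hz), hA]
    omega
  rw [sum_insert_countP A hA T1 h1, sum_insert_countP A hA T2 h2] at key
  have hpos : 0 < k - (t - 1) := by omega
  exact Nat.eq_of_mul_eq_mul_left hpos key

lemma trade_count_and {v t k : ℕ} (ht : 1 ≤ t) (htk : t ≤ k)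
    {T1 T2 : Multiset (Finset (Fin v))} (hT : IsTrade t k T1 T2)
    (A : Finset (Fin v)) (hA : A.card = t - 1) (x : Fin v) :
    Multiset.countP (fun B => A ⊆ B ∧ x ∈ B) T1
      = Multiset.countP (fun B => A ⊆ B ∧ x ∈ B) T2 := by
  by_cases hxA : x ∈ A
  · have e : ∀ s : Multiset (Finset (Fin v)),
        Multiset.countP (fun B => A ⊆ B ∧ x ∈ B) s = Multiset.countP (fun B => A ⊆ B) s := by
      intro s
      apply Multiset.countP_congr rfl
      intro B _
      exact propext ⟨fun h => h.1, fun h => ⟨h, h hxA⟩⟩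
    rw [e, e]
    exact trade_count_sub1 ht htk hT A hA
  · have e : ∀ s : Multiset (Finset (Fin v)),
        Multiset.countP (fun B => A ⊆ B ∧ x ∈ B) s
          = Multiset.countP (fun B => insert x A ⊆ B) s := by
      intro s
      apply Multiset.countP_congr rfl
      intro B _
      rw [Finset.insert_subset_iff, and_comm]
    rw [e, e]
    exact hT.2.2.2.2 _ (by rw [Finset.card_insert_of_notMem hxA, hA]; omega)

/-- For a `t`-`(v,k)` trade `T` with `t ≥ 2` and `x, y` in the foundation, every
`(t-1)`-subset is contained in the same number of blocks of `T1 + T_{2x} + T_{2y}` as of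
`T2 + T_{1x} + T_{1y}`. -/
theorem trade_minus_Tx_Ty (v t k : ℕ) (ht : 2 ≤ t) (htk : t < k) (hkv : k < v)
    (T1 T2 : Multiset (Finset (Fin v))) (hT : IsTrade t k T1 T2)
    (x y : Fin v) (hx : x ∈ foundation T1 T2) (hy : y ∈ foundation T1 T2)
    (A : Finset (Fin v)) (hA : A.card = t - 1) :
    Multiset.countP (fun B => A ⊆ B)
        (T1 + T2.filter (fun B => x ∈ B) + T2.filter (fun B => y ∈ B)) =
      Multiset.countP (fun B => A ⊆ B)
        (T2 + T1.filter (fun B => x ∈ B) + T1.filter (fun B => y ∈ B)) := by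
  have ht1 : 1 ≤ t := by omega
  have htk' : t ≤ k := by omega
  simp only [Multiset.countP_add, Multiset.countP_filter]
  rw [trade_count_sub1 ht1 htk' hT A hA,
    trade_count_and ht1 htk' hT A hA x, trade_count_and ht1 htk' hT A hA y]
end

section
/- Let t ≥ 2. There is no t-(v, t+1) trade T = {T_1, T_2} of volume s having an element x ∈ found(T) with r_x = 2^{t-1} < s such that λ_{xy} ≠ 0 for every y ∈ found(T) with y ≠ x. -/
set_option linter.unusedSectionVars false
set_option linter.unusedVariables false


section Aux

variable {α : Type} [DecidableEq α] [Fintype α]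

open Multiset

/-- Summing, over points outside `A`, the number of blocks containing `insert y A`. -/
lemma step_sum {t k : ℕ} (A : Finset α) (hA : A.card = t) (T : Multiset (Finset α))
    (hT : ∀ B ∈ T, B.card = k) :
    ∑ y ∈ Aᶜ, Multiset.countP (fun B => insert y A ⊆ B) T
      = (k - t) * Multiset.countP (fun B => A ⊆ B) T := by
  induction T using Multiset.induction with
  | empty => simp
  | cons a T ih =>
    have ha : a.card = k := hT a (Multiset.mem_cons_self a T)
    have hT' : ∀ B ∈ T, B.card = k := fun B hB => hT B (Multiset.mem_cons_of_mem hB)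
    simp only [Multiset.countP_cons]
    rw [Finset.sum_add_distrib, ih hT', Nat.mul_add]
    congr 1
    by_cases h : A ⊆ a
    · have hiff : ∀ y, (insert y A ⊆ a) ↔ y ∈ a := fun y =>
        ⟨fun hy => hy (Finset.mem_insert_self y A), fun hy => Finset.insert_subset hy h⟩
      have : ∑ y ∈ Aᶜ, (if insert y A ⊆ a then 1 else 0)
          = ∑ y ∈ Aᶜ, (if y ∈ a then 1 else 0) := by
        refine Finset.sum_congr rfl fun y _ => by simp [hiff y]
      rw [this, ← Finset.card_filter]
      have hfa : Finset.filter (fun y => y ∈ a) Aᶜ = a \ A := by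
        ext y
        simp [Finset.mem_filter, Finset.mem_sdiff, and_comm]
      rw [hfa, Finset.card_sdiff_of_subset h, ha, hA]
      simp [h]
    · have h1 : ∀ y, ¬ (insert y A ⊆ a) := fun y hy =>
        h ((Finset.subset_insert y A).trans hy)
      simp [h, h1]

lemma trade_down {t k : ℕ} {T1 T2 : Multiset (Finset α)} (h : IsTrade (t + 1) k T1 T2)
    (hk : t + 1 ≤ k) : IsTrade t k T1 T2 := by
  obtain ⟨h1, h2, h3, h4, h5⟩ := h
  refine ⟨h1, h2, h3, h4, fun A hA => ?_⟩
  have e1 := step_sum A hA T1 h1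
  have e2 := step_sum A hA T2 h2
  have hsum : ∑ y ∈ Aᶜ, Multiset.countP (fun B => insert y A ⊆ B) T1
      = ∑ y ∈ Aᶜ, Multiset.countP (fun B => insert y A ⊆ B) T2 := by
    refine Finset.sum_congr rfl fun y hy => ?_
    have hyA : y ∉ A := by simpa using hy
    exact h5 _ (by rw [Finset.card_insert_of_notMem hyA, hA])
  rw [e1, e2] at hsum
  have hkt : 0 < k - t := by omega
  exact Nat.eq_of_mul_eq_mul_left hkt hsum

lemma trade_downTo {k : ℕ} : ∀ (t : ℕ) {T1 T2 : Multiset (Finset α)}, t ≤ k →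
    IsTrade t k T1 T2 → ∀ t' ≤ t, IsTrade t' k T1 T2 := by
  intro t
  induction t with
  | zero =>
    intro T1 T2 _ h t' ht'
    have : t' = 0 := by omega
    rwa [this]
  | succ t ih =>
    intro T1 T2 hk h t' ht'
    rcases Nat.lt_or_ge t' (t+1) with hlt | hge
    · exact ih (by omega) (trade_down h hk) t' (by omega)
    · have : t' = t + 1 := by omega
      rwa [this]

end Aux

section Aux2
variable {α : Type} [DecidableEq α] [Fintype α]
open Multiset

/-- Derived trade at a point: keep blocks containing `x`, remove `x` from them. -/
def derive (x : α) (T : Multiset (Finset α)) : Multiset (Finset α) :=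
  (T.filter (fun B => x ∈ B)).map (fun B => B.erase x)

lemma countP_derive (x : α) (T : Multiset (Finset α)) (p : Finset α → Prop) [DecidablePred p] :
    Multiset.countP p (derive x T) = Multiset.countP (fun B => x ∈ B ∧ p (B.erase x)) T := by
  rw [derive, Multiset.countP_map, ← Multiset.countP_eq_card_filter, Multiset.countP_filter]
  exact Multiset.countP_congr rfl (fun B _ => by rw [eq_iff_iff]; exact and_comm)

lemma card_derive (x : α) (T : Multiset (Finset α)) :
    Multiset.card (derive x T) = Multiset.countP (fun B => x ∈ B) T := by
  rw [derive, Multiset.card_map, ← Multiset.countP_eq_card_filter]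

lemma mem_derive {x : α} {T : Multiset (Finset α)} {B : Finset α} :
    B ∈ derive x T ↔ ∃ C ∈ T, x ∈ C ∧ B = C.erase x := by
  simp only [derive, Multiset.mem_map, Multiset.mem_filter]
  constructor
  · rintro ⟨C, ⟨hC, hx⟩, rfl⟩; exact ⟨C, hC, hx, rfl⟩
  · rintro ⟨C, hC, hx, rfl⟩; exact ⟨C, ⟨hC, hx⟩, rfl⟩

lemma derive_trade {t k : ℕ} {T1 T2 : Multiset (Finset α)}
    (h : IsTrade (t + 1) (k + 1) T1 T2) (x : α)
    (hx : Multiset.countP (fun B => x ∈ B) T1 ≠ 0) :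
    IsTrade t k (derive x T1) (derive x T2) := by
  obtain ⟨h1, h2, h3, h4, h5⟩ := h
  refine ⟨?_, ?_, ?_, ?_, ?_⟩
  · rintro B hB
    obtain ⟨C, hC, hxC, rfl⟩ := mem_derive.mp hB
    rw [Finset.card_erase_of_mem hxC, h1 C hC]
    omega
  · rintro B hB
    obtain ⟨C, hC, hxC, rfl⟩ := mem_derive.mp hB
    rw [Finset.card_erase_of_mem hxC, h2 C hC]
    omega
  · rintro B hB1 hB2
    obtain ⟨C1, hC1, hx1, rfl⟩ := mem_derive.mp hB1
    obtain ⟨C2, hC2, hx2, he⟩ := mem_derive.mp hB2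
    have : C1 = C2 := by
      rw [← Finset.insert_erase hx1, ← Finset.insert_erase hx2, ← he]
    exact h3 C1 hC1 (this ▸ hC2)
  · intro h0
    apply hx
    rw [← card_derive, h0, Multiset.card_zero]
  · intro A hA
    by_cases hxA : x ∈ A
    · have z1 : Multiset.countP (fun B => A ⊆ B) (derive x T1) = 0 := by
        rw [Multiset.countP_eq_zero]
        rintro B hB hAB
        obtain ⟨C, _, _, rfl⟩ := mem_derive.mp hB
        exact (Finset.notMem_erase x C) (hAB hxA)
      have z2 : Multiset.countP (fun B => A ⊆ B) (derive x T2) = 0 := by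
        rw [Multiset.countP_eq_zero]
        rintro B hB hAB
        obtain ⟨C, _, _, rfl⟩ := mem_derive.mp hB
        exact (Finset.notMem_erase x C) (hAB hxA)
      rw [z1, z2]
    · have key : ∀ T : Multiset (Finset α), Multiset.countP (fun B => A ⊆ B) (derive x T)
          = Multiset.countP (fun B => insert x A ⊆ B) T := by
        intro T
        rw [countP_derive]
        refine Multiset.countP_congr rfl (fun B _ => ?_)
        rw [eq_iff_iff]
        constructor
        · rintro ⟨hxB, hAB⟩
          exact Finset.insert_subset hxB (hAB.trans (Finset.erase_subset x B))
        · intro hins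
          have hxB : x ∈ B := hins (Finset.mem_insert_self x A)
          refine ⟨hxB, ?_⟩
          rw [Finset.subset_erase]
          exact ⟨(Finset.subset_insert x A).trans hins, hxA⟩
      rw [key, key]
      exact h5 _ (by rw [Finset.card_insert_of_notMem hxA, hA])

/-- Residual trade at a point: the blocks avoiding `x`. -/
def resid (x : α) (T : Multiset (Finset α)) : Multiset (Finset α) :=
  T.filter (fun B => x ∉ B)

lemma mem_resid {x : α} {T : Multiset (Finset α)} {B : Finset α} :
    B ∈ resid x T ↔ B ∈ T ∧ x ∉ B := Multiset.mem_filter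

lemma card_resid (x : α) (T : Multiset (Finset α)) :
    Multiset.card T = Multiset.countP (fun B => x ∈ B) T + Multiset.card (resid x T) := by
  rw [resid, ← Multiset.countP_eq_card_filter, Multiset.countP_eq_card_filter,
    Multiset.countP_eq_card_filter, ← Multiset.card_add, Multiset.filter_add_not]

lemma resid_trade {t k : ℕ} {T1 T2 : Multiset (Finset α)}
    (h : IsTrade (t + 1) k T1 T2) (hk : t + 1 ≤ k) (x : α)
    (hne : resid x T1 ≠ 0) :
    IsTrade t k (resid x T1) (resid x T2) := by
  have hdown := trade_down h hk
  obtain ⟨h1, h2, h3, h4, h5⟩ := h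
  obtain ⟨_, _, _, _, h5'⟩ := hdown
  refine ⟨fun B hB => h1 B (mem_resid.mp hB).1, fun B hB => h2 B (mem_resid.mp hB).1,
    fun B hB hB2 => h3 B (mem_resid.mp hB).1 (mem_resid.mp hB2).1, hne, ?_⟩
  intro A hA
  have key : ∀ T : Multiset (Finset α),
      Multiset.countP (fun B => A ⊆ B) T
        = Multiset.countP (fun B => A ⊆ B ∧ x ∈ B) T
          + Multiset.countP (fun B => A ⊆ B) (resid x T) := by
    intro T
    rw [resid, Multiset.countP_filter]
    rw [Multiset.countP_eq_card_filter (fun B => A ⊆ B),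
      ← Multiset.filter_add_not (fun B => x ∈ B) (Multiset.filter (fun B => A ⊆ B) T),
      Multiset.card_add, ← Multiset.countP_eq_card_filter, ← Multiset.countP_eq_card_filter,
      Multiset.countP_filter, Multiset.countP_filter]
    congr 1
    · exact Multiset.countP_congr rfl (fun B _ => by rw [eq_iff_iff]; exact and_comm)
    · exact Multiset.countP_congr rfl (fun B _ => by rw [eq_iff_iff]; exact and_comm)
  by_cases hxA : x ∈ A
  · have z : ∀ T : Multiset (Finset α),
        Multiset.countP (fun B => A ⊆ B) (resid x T) = 0 := by
      intro T
      rw [Multiset.countP_eq_zero]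
      rintro B hB hAB
      exact (mem_resid.mp hB).2 (hAB hxA)
    rw [z, z]
  · have e1 : Multiset.countP (fun B => A ⊆ B ∧ x ∈ B) T1
        = Multiset.countP (fun B => A ⊆ B ∧ x ∈ B) T2 := by
      have : ∀ T : Multiset (Finset α), Multiset.countP (fun B => A ⊆ B ∧ x ∈ B) T
          = Multiset.countP (fun B => insert x A ⊆ B) T := by
        intro T
        refine Multiset.countP_congr rfl (fun B _ => ?_)
        rw [eq_iff_iff, Finset.insert_subset_iff, and_comm]
      rw [this, this]
      exact h5 _ (by rw [Finset.card_insert_of_notMem hxA, hA])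
    have e0 : Multiset.countP (fun B => A ⊆ B) T1 = Multiset.countP (fun B => A ⊆ B) T2 :=
      h5' A hA
    have k1 := key T1
    have k2 := key T2
    omega

end Aux2

section Aux3
variable {α : Type} [DecidableEq α] [Fintype α]
open Multiset

lemma card_eq_trade {t k : ℕ} {T1 T2 : Multiset (Finset α)} (h : IsTrade t k T1 T2)
    (hk : t ≤ k) : Multiset.card T1 = Multiset.card T2 := by
  have h0 := trade_downTo t hk h 0 (Nat.zero_le t)
  have := h0.2.2.2.2 ∅ Finset.card_empty
  rwa [Multiset.countP_eq_card.mpr (fun b _ => Finset.empty_subset b),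
    Multiset.countP_eq_card.mpr (fun b _ => Finset.empty_subset b)] at this

lemma rx_eq_trade {t k : ℕ} {T1 T2 : Multiset (Finset α)} (h : IsTrade (t + 1) k T1 T2)
    (hk : t + 1 ≤ k) (x : α) :
    Multiset.countP (fun B => x ∈ B) T1 = Multiset.countP (fun B => x ∈ B) T2 := by
  have h1 := trade_downTo (t + 1) hk h 1 (by omega)
  have := h1.2.2.2.2 {x} (Finset.card_singleton x)
  have e : ∀ T : Multiset (Finset α), Multiset.countP (fun B => ({x} : Finset α) ⊆ B) T
      = Multiset.countP (fun B => x ∈ B) T := fun T =>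
    Multiset.countP_congr rfl (fun B _ => by rw [eq_iff_iff, Finset.singleton_subset_iff])
  rwa [e, e] at this

lemma exists_split {t k : ℕ} {T1 T2 : Multiset (Finset α)} (h : IsTrade (t + 1) k T1 T2)
    (hk : t + 1 ≤ k) :
    ∃ x B1, B1 ∈ T1 ∧ x ∈ B1 ∧ Multiset.countP (fun B => x ∈ B) T1 ≠ 0 ∧
      resid x T1 ≠ 0 := by
  obtain ⟨B1, hB1⟩ := Multiset.exists_mem_of_ne_zero h.2.2.2.1
  have hcard := card_eq_trade h hk
  have hT2ne : T2 ≠ 0 := by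
    intro h0
    apply h.2.2.2.1
    rw [← Multiset.card_eq_zero, hcard, h0, Multiset.card_zero]
  obtain ⟨B2, hB2⟩ := Multiset.exists_mem_of_ne_zero hT2ne
  have hne : B1 ≠ B2 := fun he => h.2.2.1 B1 hB1 (he ▸ hB2)
  have hnsub : ¬ B1 ⊆ B2 := fun hsub =>
    hne (Finset.eq_of_subset_of_card_le hsub
      (by rw [h.1 B1 hB1, h.2.1 B2 hB2]))
  obtain ⟨x, hxB1, hxB2⟩ := Finset.not_subset.mp hnsub
  refine ⟨x, B1, hB1, hxB1, ?_, ?_⟩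
  · intro h0
    have := Multiset.countP_pos (p := fun B => x ∈ B) |>.mpr ⟨B1, hB1, hxB1⟩
    omega
  · have hrx := rx_eq_trade h hk x
    have hc1 := card_resid x T1
    have hc2 := card_resid x T2
    have hpos : 0 < Multiset.card (resid x T2) :=
      Multiset.card_pos.mpr (fun h0 => by
        have : B2 ∈ resid x T2 := mem_resid.mpr ⟨hB2, hxB2⟩
        rw [h0] at this; exact Multiset.notMem_zero B2 this)
    intro h0
    rw [h0, Multiset.card_zero] at hc1
    omega

theorem vol_bound (t : ℕ) : ∀ {k : ℕ} {T1 T2 : Multiset (Finset α)},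
    IsTrade t k T1 T2 → t < k → 2 ^ t ≤ Multiset.card T1 := by
  induction t with
  | zero =>
    intro k T1 T2 h _
    rw [pow_zero]; exact Multiset.card_pos.mpr h.2.2.2.1
  | succ t ih =>
    intro k T1 T2 h hk
    obtain ⟨x, B1, hB1, hxB1, hx, hres⟩ := exists_split h (le_of_lt hk)
    obtain ⟨k', rfl⟩ : ∃ k', k = k' + 1 := ⟨k - 1, by omega⟩
    have hih1 := ih (derive_trade h x hx) (by omega)
    have hih2 := ih (resid_trade h (by omega) x hres) (by omega)
    have hcr := card_resid x T1
    rw [card_derive] at hih1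
    have hpow : 2 ^ (t + 1) = 2 ^ t + 2 ^ t := by ring
    omega

lemma mem_foundation {T1 T2 : Multiset (Finset α)} {y : α} :
    y ∈ foundation T1 T2 ↔ ∃ B, (B ∈ T1 ∨ B ∈ T2) ∧ y ∈ B := by
  simp only [foundation, Finset.mem_biUnion, Multiset.mem_toFinset, Multiset.mem_add, id]

lemma block_subset_foundation_left {T1 T2 : Multiset (Finset α)} {B : Finset α}
    (hB : B ∈ T1) : B ⊆ foundation T1 T2 :=
  fun y hy => mem_foundation.mpr ⟨B, Or.inl hB, hy⟩

lemma block_subset_foundation_right {T1 T2 : Multiset (Finset α)} {B : Finset α}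
    (hB : B ∈ T2) : B ⊆ foundation T1 T2 :=
  fun y hy => mem_foundation.mpr ⟨B, Or.inr hB, hy⟩

lemma found_resid_subset {T1 T2 : Multiset (Finset α)} {x : α} :
    foundation (resid x T1) (resid x T2) ⊆ foundation T1 T2 := by
  intro y hy
  obtain ⟨B, hB, hyB⟩ := mem_foundation.mp hy
  exact mem_foundation.mpr ⟨B, hB.imp (fun h => (mem_resid.mp h).1) (fun h => (mem_resid.mp h).1), hyB⟩

lemma not_mem_found_resid {T1 T2 : Multiset (Finset α)} {x : α} :
    x ∉ foundation (resid x T1) (resid x T2) := by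
  intro hx
  obtain ⟨B, hB, hxB⟩ := mem_foundation.mp hx
  rcases hB with h | h
  · exact (mem_resid.mp h).2 hxB
  · exact (mem_resid.mp h).2 hxB

theorem found_bound (t : ℕ) : ∀ {k : ℕ} {T1 T2 : Multiset (Finset α)},
    IsTrade t k T1 T2 → t ≤ k → k + t + 1 ≤ (foundation T1 T2).card := by
  induction t with
  | zero =>
    intro k T1 T2 h hk
    obtain ⟨B1, hB1⟩ := Multiset.exists_mem_of_ne_zero h.2.2.2.1
    have hcard := card_eq_trade h hk
    have hT2ne : T2 ≠ 0 := by
      intro h0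
      apply h.2.2.2.1
      rw [← Multiset.card_eq_zero, hcard, h0, Multiset.card_zero]
    obtain ⟨B2, hB2⟩ := Multiset.exists_mem_of_ne_zero hT2ne
    have hne : B2 ≠ B1 := fun he => h.2.2.1 B1 hB1 (he ▸ hB2)
    have hnsub : ¬ B2 ⊆ B1 := fun hsub =>
      hne (Finset.eq_of_subset_of_card_le hsub
        (by rw [h.1 B1 hB1, h.2.1 B2 hB2]))
    obtain ⟨x, hxB2, hxB1⟩ := Finset.not_subset.mp hnsub
    have hsub : insert x B1 ⊆ foundation T1 T2 :=
      Finset.insert_subset (block_subset_foundation_right hB2 hxB2)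
        (block_subset_foundation_left hB1)
    have := Finset.card_le_card hsub
    rw [Finset.card_insert_of_notMem hxB1, h.1 B1 hB1] at this
    omega
  | succ t ih =>
    intro k T1 T2 h hk
    obtain ⟨x, B1, hB1, hxB1, hx, hres⟩ := exists_split h hk
    have hih := ih (resid_trade h hk x hres) (by omega)
    have hsub : insert x (foundation (resid x T1) (resid x T2)) ⊆ foundation T1 T2 :=
      Finset.insert_subset (block_subset_foundation_left hB1 hxB1) found_resid_subset
    have := Finset.card_le_card hsub
    rw [Finset.card_insert_of_notMem not_mem_found_resid] at this
    omega

end Aux3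

section Main
variable {α : Type} [DecidableEq α] [Fintype α]
open Multiset

lemma sum_countP_mem {S : Finset α} {c : ℕ} (T : Multiset (Finset α))
    (hT : ∀ B ∈ T, B ⊆ S ∧ B.card = c) :
    ∑ y ∈ S, Multiset.countP (fun B => y ∈ B) T = c * Multiset.card T := by
  induction T using Multiset.induction with
  | empty => simp
  | cons a T ih =>
    have ha := hT a (Multiset.mem_cons_self a T)
    have hT' : ∀ B ∈ T, B ⊆ S ∧ B.card = c := fun B hB => hT B (Multiset.mem_cons_of_mem hB)
    simp only [Multiset.countP_cons, Multiset.card_cons]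
    rw [Finset.sum_add_distrib, ih hT', ← Finset.card_filter]
    have hfa : Finset.filter (fun y => y ∈ a) S = a := by
      ext y
      simp only [Finset.mem_filter, and_iff_right_iff_imp]
      exact fun hy => ha.1 hy
    rw [hfa, ha.2, Nat.mul_add, Nat.mul_one]


/-- For `t ≥ 2`, there is no `t`-`(v, t+1)` trade of volume `s` having an element `x` of
the foundation with `r_x = 2^(t-1) < s` such that `λ_{xy} ≠ 0` for every `y ≠ x` in the
foundation. -/
theorem no_trade_with_all_lambda_nonzero (v t s : ℕ) (ht : 2 ≤ t) (hv : t + 1 < v) :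
    ¬ ∃ (T1 T2 : Multiset (Finset (Fin v))) (x : Fin v),
        IsTrade t (t + 1) T1 T2 ∧ Multiset.card T1 = s ∧
        x ∈ foundation T1 T2 ∧ rx T1 x = 2 ^ (t - 1) ∧ 2 ^ (t - 1) < s ∧
        ∀ y ∈ foundation T1 T2, y ≠ x → lamxy T1 x y ≠ 0 := by
  rintro ⟨T1, T2, x, hT, hs, hxf, hrx, hlt, hlam⟩
  obtain ⟨m, rfl⟩ : ∃ m, t = m + 2 := ⟨t - 2, by omega⟩
  have hrx' : Multiset.countP (fun B => x ∈ B) T1 = 2 ^ (m + 1) := by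
    have : m + 2 - 1 = m + 1 := by omega
    rw [this] at hrx
    exact hrx
  have hx0 : Multiset.countP (fun B => x ∈ B) T1 ≠ 0 := by
    rw [hrx']
    positivity
  -- derived trade at x : an (m+1)-(·, m+2) trade
  have hD : IsTrade (m + 1) (m + 2) (derive x T1) (derive x T2) :=
    derive_trade hT x hx0
  set F := foundation T1 T2 with hF
  -- foundation bound for the original trade
  have hfound : (m + 3) + (m + 2) + 1 ≤ F.card := found_bound (m + 2) hT (by omega)
  -- every point of F \ {x} is covered at least 2^m times by blocks of the derived trade
  have hlow : ∀ y ∈ F.erase x, 2 ^ m ≤ Multiset.countP (fun B => y ∈ B) (derive x T1) := by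
    intro y hy
    obtain ⟨hyx, hyF⟩ := Finset.mem_erase.mp hy
    have lam_eq : Multiset.countP (fun B => y ∈ B) (derive x T1) = lamxy T1 x y := by
      rw [countP_derive]
      refine Multiset.countP_congr rfl (fun B _ => ?_)
      rw [eq_iff_iff]
      constructor
      · rintro ⟨hxB, hyB⟩
        exact ⟨hxB, (Finset.mem_erase.mp hyB).2⟩
      · rintro ⟨hxB, hyB⟩
        exact ⟨hxB, Finset.mem_erase.mpr ⟨hyx, hyB⟩⟩
    have hy0 : Multiset.countP (fun B => y ∈ B) (derive x T1) ≠ 0 := by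
      rw [lam_eq]
      exact hlam y hyF hyx
    have hDD : IsTrade m (m + 1) (derive y (derive x T1)) (derive y (derive x T2)) :=
      derive_trade hD y hy0
    have := vol_bound m hDD (by omega)
    rwa [card_derive] at this
  -- total count
  have hblocks : ∀ B ∈ derive x T1, B ⊆ F.erase x ∧ B.card = m + 2 := by
    intro B hB
    obtain ⟨C, hC, hxC, rfl⟩ := mem_derive.mp hB
    constructor
    · exact Finset.erase_subset_erase x (block_subset_foundation_left hC)
    · rw [Finset.card_erase_of_mem hxC, hT.1 C hC]
      omega
  have hsum : ∑ y ∈ F.erase x, Multiset.countP (fun B => y ∈ B) (derive x T1)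
      = (m + 2) * 2 ^ (m + 1) := by
    rw [sum_countP_mem _ hblocks, card_derive, hrx']
  have hcard_low : (F.erase x).card * 2 ^ m
      ≤ ∑ y ∈ F.erase x, Multiset.countP (fun B => y ∈ B) (derive x T1) := by
    calc (F.erase x).card * 2 ^ m = (F.erase x).card • 2 ^ m := by rw [smul_eq_mul]
    _ ≤ _ := Finset.card_nsmul_le_sum _ _ _ hlow
  rw [hsum] at hcard_low
  have hce : (F.erase x).card = F.card - 1 := Finset.card_erase_of_mem hxf
  have hpow : (m + 2) * 2 ^ (m + 1) = (2 * m + 4) * 2 ^ m := by ring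
  rw [hce, hpow] at hcard_low
  have hle : F.card - 1 ≤ 2 * m + 4 :=
    Nat.le_of_mul_le_mul_right hcard_low (by positivity)
  omega


end Main
end

section
/- Every t-(v,k) trade has volume s ≥ 2^t. -/
section Aux

variable {α : Type} [DecidableEq α] [Fintype α]

open Multiset Finset

/-- Summing counts of `insert x A` over `x ∉ A`. -/
lemma countP_insert_sum (k : ℕ) (A : Finset α) (T : Multiset (Finset α))
    (hk : ∀ B ∈ T, B.card = k) :
    ∑ x ∈ Aᶜ, T.countP (fun B => insert x A ⊆ B)
      = (k - A.card) * T.countP (fun B => A ⊆ B) := by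
  induction T using Multiset.induction_on with
  | empty => simp
  | cons B T ih =>
    have hkB : B.card = k := hk B (Multiset.mem_cons_self B T)
    have hkT : ∀ C ∈ T, C.card = k := fun C hC => hk C (Multiset.mem_cons_of_mem hC)
    simp only [Multiset.countP_cons]
    rw [Finset.sum_add_distrib, ih hkT, Nat.mul_add]
    congr 1
    by_cases hAB : A ⊆ B
    · have : ∀ x ∈ Aᶜ, (if insert x A ⊆ B then 1 else 0) = (if x ∈ B \ A then 1 else 0) := by
        intro x hx
        simp only [Finset.mem_compl] at hx
        by_cases hxB : x ∈ B
        · simp [Finset.insert_subset_iff, hxB, hAB, Finset.mem_sdiff, hx]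
        · simp [Finset.insert_subset_iff, hxB, Finset.mem_sdiff]
      rw [Finset.sum_congr rfl this]
      have hsub : B \ A ⊆ Aᶜ := by
        intro x hx
        simp only [Finset.mem_sdiff] at hx
        simpa using hx.2
      rw [Finset.sum_ite_mem, Finset.inter_eq_right.mpr hsub, Finset.sum_const,
        Finset.card_sdiff_of_subset hAB, hkB]
      simp [hAB]
    · have : ∀ x ∈ Aᶜ, (if insert x A ⊆ B then 1 else 0) = 0 := by
        intro x _
        have : ¬ insert x A ⊆ B := fun h => hAB ((Finset.subset_insert x A).trans h)
        simp [this]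
      rw [Finset.sum_congr rfl this]
      simp [hAB]

/-- a `(t+1)`-trade is a `t`-trade. -/
lemma IsTrade.step_down {t k : ℕ} {T1 T2 : Multiset (Finset α)}
    (htk : t + 1 ≤ k) (hT : IsTrade (t + 1) k T1 T2) : IsTrade t k T1 T2 := by
  obtain ⟨h1, h2, h3, h4, h5⟩ := hT
  refine ⟨h1, h2, h3, h4, ?_⟩
  intro A hA
  have key : ∑ x ∈ Aᶜ, T1.countP (fun B => insert x A ⊆ B)
      = ∑ x ∈ Aᶜ, T2.countP (fun B => insert x A ⊆ B) := by
    refine Finset.sum_congr rfl fun x hx => ?_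
    refine h5 _ ?_
    rw [Finset.card_insert_of_notMem (by simpa using hx), hA]
  rw [countP_insert_sum k A T1 h1, countP_insert_sum k A T2 h2] at key
  have hpos : 0 < k - A.card := by omega
  exact Nat.eq_of_mul_eq_mul_left hpos key

lemma IsTrade.down {k : ℕ} : ∀ {t i : ℕ} {T1 T2 : Multiset (Finset α)},
    i ≤ t → t ≤ k → IsTrade t k T1 T2 → IsTrade i k T1 T2 := by
  intro t
  induction t with
  | zero =>
    intro i T1 T2 hik _ hT
    rwa [Nat.le_zero.mp hik]
  | succ n ih =>
    intro i T1 T2 hik htk hT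
    rcases Nat.eq_or_lt_of_le hik with h | h
    · subst h; exact hT
    · exact ih (by omega) (by omega) (hT.step_down htk)

lemma IsTrade.card_eq {t k : ℕ} {T1 T2 : Multiset (Finset α)}
    (htk : t ≤ k) (hT : IsTrade t k T1 T2) : Multiset.card T1 = Multiset.card T2 := by
  have h0 : IsTrade 0 k T1 T2 := hT.down (Nat.zero_le t) htk
  have := h0.2.2.2.2 ∅ (Finset.card_empty)
  simpa [Multiset.countP_eq_card_filter, Multiset.filter_eq_self.mpr] using this

lemma trade_vol {t : ℕ} : ∀ (k : ℕ) (T1 T2 : Multiset (Finset α)),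
    t ≤ k → IsTrade t k T1 T2 → 2 ^ t ≤ Multiset.card T1 := by
  induction t with
  | zero =>
    intro k T1 T2 _ hT
    have := hT.2.2.2.1
    rw [pow_zero]
    exact Multiset.card_pos.mpr this
  | succ t ih =>
    intro k T1 T2 htk hT
    obtain ⟨h1, h2, h3, h4, h5⟩ := hT
    -- pick B ∈ T1, B' ∈ T2, x ∈ B' \ B
    obtain ⟨B, hB⟩ := Multiset.exists_mem_of_ne_zero h4
    have hcard : Multiset.card T1 = Multiset.card T2 :=
      IsTrade.card_eq htk ⟨h1, h2, h3, h4, h5⟩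
    have hT2ne : T2 ≠ 0 := by
      intro h
      rw [h, Multiset.card_zero] at hcard
      exact h4 (Multiset.card_eq_zero.mp hcard)
    obtain ⟨B', hB'⟩ := Multiset.exists_mem_of_ne_zero hT2ne
    have hBB' : B ≠ B' := fun h => h3 B hB (h ▸ hB')
    obtain ⟨x, hxB', hxB⟩ : ∃ x, x ∈ B' ∧ x ∉ B := by
      by_contra hcon
      push_neg at hcon
      exact hBB' (Finset.eq_of_subset_of_card_le hcon
        (by rw [h1 B hB, h2 B' hB']) |>.symm) -- B' ⊆ B, cards equal
    -- derived and residual trades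
    set D1 : Multiset (Finset α) := (T1.filter (fun B => x ∈ B)).map (fun B => B.erase x) with hD1
    set D2 : Multiset (Finset α) := (T2.filter (fun B => x ∈ B)).map (fun B => B.erase x) with hD2
    set R1 : Multiset (Finset α) := T1.filter (fun B => x ∉ B) with hR1
    set R2 : Multiset (Finset α) := T2.filter (fun B => x ∉ B) with hR2
    -- counts in D equal counts of insert x A
    have hDcount : ∀ (T : Multiset (Finset α)) (A : Finset α), x ∉ A →
        Multiset.countP (fun B => A ⊆ B)
          ((T.filter (fun B => x ∈ B)).map (fun B => B.erase x))
          = Multiset.countP (fun B => insert x A ⊆ B) T := by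
      intro T A hxA
      rw [Multiset.countP_map, ← Multiset.countP_eq_card_filter, Multiset.countP_filter]
      refine Multiset.countP_congr rfl fun C _ => ?_
      simp only [eq_iff_iff]
      constructor
      · rintro ⟨hAC, hxC⟩
        rw [Finset.insert_subset_iff]
        exact ⟨hxC, hAC.trans (Finset.erase_subset x C)⟩
      · intro h
        rw [Finset.insert_subset_iff] at h
        exact ⟨Finset.subset_erase.mpr ⟨h.2, fun hc => hxA hc⟩, h.1⟩
    -- r_x equality
    have h1trade : IsTrade 1 k T1 T2 :=
      IsTrade.down (by omega) (by omega) ⟨h1, h2, h3, h4, h5⟩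
    have hrx : Multiset.countP (fun B => x ∈ B) T1 = Multiset.countP (fun B => x ∈ B) T2 := by
      have := h1trade.2.2.2.2 {x} (Finset.card_singleton x)
      refine Eq.trans (Eq.trans ?_ this) ?_ <;>
        exact Multiset.countP_congr rfl fun C _ => by simp [Finset.singleton_subset_iff]
    -- t-trade (one step down)
    have httrade : IsTrade t k T1 T2 :=
      IsTrade.down (by omega) (by omega) ⟨h1, h2, h3, h4, h5⟩
    -- D is a trade
    have hD : IsTrade t (k - 1) D1 D2 := by
      refine ⟨?_, ?_, ?_, ?_, ?_⟩
      · intro C hC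
        rw [hD1] at hC
        obtain ⟨C', hC', rfl⟩ := Multiset.mem_map.mp hC
        have := Multiset.mem_filter.mp hC'
        rw [Finset.card_erase_of_mem this.2, h1 _ this.1]
      · intro C hC
        rw [hD2] at hC
        obtain ⟨C', hC', rfl⟩ := Multiset.mem_map.mp hC
        have := Multiset.mem_filter.mp hC'
        rw [Finset.card_erase_of_mem this.2, h2 _ this.1]
      · intro C hC1 hC2
        rw [hD1] at hC1; rw [hD2] at hC2
        obtain ⟨C1, hC1', he1⟩ := Multiset.mem_map.mp hC1
        obtain ⟨C2, hC2', he2⟩ := Multiset.mem_map.mp hC2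
        have h1' := Multiset.mem_filter.mp hC1'
        have h2' := Multiset.mem_filter.mp hC2'
        have : C1 = C2 := by
          have e1 : insert x (C1.erase x) = C1 := Finset.insert_erase h1'.2
          have e2 : insert x (C2.erase x) = C2 := Finset.insert_erase h2'.2
          rw [← e1, ← e2, he1, he2]
        exact h3 C1 h1'.1 (this ▸ h2'.1)
      · rw [hD1]
        simp only [ne_eq, Multiset.map_eq_zero]
        intro hcon
        have hz : Multiset.countP (fun B => x ∈ B) T1 = 0 := by
          rw [Multiset.countP_eq_card_filter, hcon]; simp
        rw [hrx] at hz
        rw [Multiset.countP_eq_zero] at hz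
        exact hz B' hB' hxB'
      · intro A hA
        by_cases hxA : x ∈ A
        · rw [Multiset.countP_eq_zero.mpr, Multiset.countP_eq_zero.mpr]
          · intro C hC
            rw [hD2] at hC
            obtain ⟨C', _, rfl⟩ := Multiset.mem_map.mp hC
            intro hsub
            exact Finset.notMem_erase x C' (hsub hxA)
          · intro C hC
            rw [hD1] at hC
            obtain ⟨C', _, rfl⟩ := Multiset.mem_map.mp hC
            intro hsub
            exact Finset.notMem_erase x C' (hsub hxA)
        · rw [hD1, hD2, hDcount T1 A hxA, hDcount T2 A hxA]
          exact h5 _ (by rw [Finset.card_insert_of_notMem hxA, hA])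
    -- R is a trade
    have hRsplit : ∀ (T : Multiset (Finset α)) (p : Finset α → Prop) [DecidablePred p],
        Multiset.countP p T = Multiset.countP p (T.filter (fun B => x ∈ B))
          + Multiset.countP p (T.filter (fun B => x ∉ B)) := by
      intro T p _
      conv_lhs => rw [← Multiset.filter_add_not (fun B => x ∈ B) T]
      rw [Multiset.countP_add]
    have hR : IsTrade t k R1 R2 := by
      refine ⟨fun C hC => h1 C (Multiset.mem_of_mem_filter hC),
        fun C hC => h2 C (Multiset.mem_of_mem_filter hC),
        fun C hC1 hC2 => h3 C (Multiset.mem_of_mem_filter hC1) (Multiset.mem_of_mem_filter hC2),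
        ?_, ?_⟩
      · rw [hR1]
        intro hcon
        have : B ∈ T1.filter (fun B => x ∉ B) := Multiset.mem_filter.mpr ⟨hB, hxB⟩
        rw [hcon] at this
        simp at this
      · intro A hA
        by_cases hxA : x ∈ A
        · rw [Multiset.countP_eq_zero.mpr, Multiset.countP_eq_zero.mpr]
          · intro C hC hsub
            exact (Multiset.mem_filter.mp hC).2 (hsub hxA)
          · intro C hC hsub
            exact (Multiset.mem_filter.mp hC).2 (hsub hxA)
        · have e1 := hRsplit T1 (fun B => A ⊆ B)
          have e2 := hRsplit T2 (fun B => A ⊆ B)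
          have hAeq : Multiset.countP (fun B => A ⊆ B) T1
              = Multiset.countP (fun B => A ⊆ B) T2 := httrade.2.2.2.2 A hA
          have hfil1 : Multiset.countP (fun B => A ⊆ B) (T1.filter (fun B => x ∈ B))
              = Multiset.countP (fun B => A ⊆ B) (T2.filter (fun B => x ∈ B)) := by
            rw [Multiset.countP_filter, Multiset.countP_filter]
            have e3 : ∀ (T : Multiset (Finset α)),
                Multiset.countP (fun B => A ⊆ B ∧ x ∈ B) T
                  = Multiset.countP (fun B => insert x A ⊆ B) T := by
              intro T
              refine Multiset.countP_congr rfl fun C _ => ?_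
              simp [Finset.insert_subset_iff, and_comm]
            rw [e3, e3]
            exact h5 _ (by rw [Finset.card_insert_of_notMem hxA, hA])
          rw [hR1, hR2]
          omega
    -- conclude
    have hDvol : 2 ^ t ≤ Multiset.card D1 := ih (k - 1) D1 D2 (by omega) hD
    have hRvol : 2 ^ t ≤ Multiset.card R1 := ih k R1 R2 (by omega) hR
    have hsplit : Multiset.card T1 = Multiset.card D1 + Multiset.card R1 := by
      rw [hD1, hR1, Multiset.card_map]
      conv_lhs => rw [← Multiset.filter_add_not (fun B => x ∈ B) T1]
      rw [Multiset.card_add]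
    rw [pow_succ]
    omega

end Aux


/-- Every `t`-`(v,k)` trade has volume `s ≥ 2^t`. -/
theorem trade_vol_ge_pow (v t k : ℕ) (ht : 0 < t) (htk : t < k) (hkv : k < v)
    (T1 T2 : Multiset (Finset (Fin v))) (hT : IsTrade t k T1 T2) :
    2 ^ t ≤ Multiset.card T1 :=
  trade_vol k T1 T2 (le_of_lt htk) hT
end
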